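/- Every locally finite metric space (with at least one point) is stable: for any two bounded sequences (xₙ), (yₘ) in X and any two nonprincipal ultrafilters 𝒰, 𝒱 on ℕ, lim_{n,𝒰} lim_{m,𝒱} d(xₙ,yₘ) = lim_{m,𝒱} lim_{n,𝒰} d(xₙ,yₘ). -/

import Mathlib

/-- A bounded sequence into a locally finite metric space is eventually constant
along any ultrafilter. -/
lemma exists_eventually_eq_of_bounded {X : Type*} [MetricSpace X]
    (hlf : ∀ (x : X) (r : ℝ), (Metric.closedBall x r).Finite)
    (x : ℕ → X) (hx : ∃ C : ℝ, ∀ n m : ℕ, dist (x n) (x m) ≤ C)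
    (𝒰 : Ultrafilter ℕ) : ∃ a : X, ∀ᶠ n in (𝒰 : Filter ℕ), x n = a := by
  obtain ⟨C, hC⟩ := hx
  have hrange : (Set.range x).Finite := by
    refine ((hlf (x 0) C).subset ?_)
    rintro _ ⟨n, rfl⟩
    simpa [Metric.mem_closedBall, dist_comm] using hC n 0
  have hmem : Set.range x ∈ 𝒰.map x := by
    exact Filter.mem_map.mpr (by simp [Set.preimage_range])
  obtain ⟨a, -, ha⟩ := Ultrafilter.eq_pure_of_finite_mem hrange hmem
  refine ⟨a, ?_⟩
  have : {n | x n = a} ∈ (𝒰 : Filter ℕ) := by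
    have : {a} ∈ (𝒰.map x : Filter X) := by simp [ha]
    simpa [Filter.mem_map, Set.preimage] using this
  exact this

/-- Every (nonempty) locally finite metric space is stable: for any two bounded
sequences and any two nonprincipal ultrafilters on `ℕ`, the iterated ultrafilter
limits of the distances coincide. -/
theorem stable_of_locallyFinite {X : Type*} [MetricSpace X] [Nonempty X]
    (hlf : ∀ (x : X) (r : ℝ), (Metric.closedBall x r).Finite)
    (x y : ℕ → X)
    (hx : ∃ C : ℝ, ∀ n m : ℕ, dist (x n) (x m) ≤ C)
    (hy : ∃ C : ℝ, ∀ n m : ℕ, dist (y n) (y m) ≤ C)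
    (𝒰 𝒱 : Ultrafilter ℕ)
    (h𝒰 : (𝒰 : Filter ℕ) ≤ Filter.cofinite) (h𝒱 : (𝒱 : Filter ℕ) ≤ Filter.cofinite) :
    Filter.limUnder (𝒰 : Filter ℕ)
        (fun n => Filter.limUnder (𝒱 : Filter ℕ) (fun m => dist (x n) (y m)))
      = Filter.limUnder (𝒱 : Filter ℕ)
        (fun m => Filter.limUnder (𝒰 : Filter ℕ) (fun n => dist (x n) (y m))) := by
  obtain ⟨a, ha⟩ := exists_eventually_eq_of_bounded hlf x hx 𝒰
  obtain ⟨b, hb⟩ := exists_eventually_eq_of_bounded hlf y hy 𝒱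
  have h1 : ∀ n : ℕ, Filter.limUnder (𝒱 : Filter ℕ) (fun m => dist (x n) (y m))
      = dist (x n) b := by
    intro n
    refine Filter.Tendsto.limUnder_eq ?_
    exact Filter.Tendsto.congr' (hb.mono fun m hm => by simp [hm]) tendsto_const_nhds
  have h2 : ∀ m : ℕ, Filter.limUnder (𝒰 : Filter ℕ) (fun n => dist (x n) (y m))
      = dist a (y m) := by
    intro m
    refine Filter.Tendsto.limUnder_eq ?_
    exact Filter.Tendsto.congr' (ha.mono fun n hn => by simp [hn]) tendsto_const_nhds
  have hL : Filter.limUnder (𝒰 : Filter ℕ)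
      (fun n => Filter.limUnder (𝒱 : Filter ℕ) (fun m => dist (x n) (y m))) = dist a b := by
    refine Filter.Tendsto.limUnder_eq ?_
    refine Filter.Tendsto.congr' ?_ (tendsto_const_nhds (x := dist a b))
    refine ha.mono fun n hn => ?_
    show dist a b = Filter.limUnder (𝒱 : Filter ℕ) fun m => dist (x n) (y m)
    rw [h1 n, hn]
  have hR : Filter.limUnder (𝒱 : Filter ℕ)
      (fun m => Filter.limUnder (𝒰 : Filter ℕ) (fun n => dist (x n) (y m))) = dist a b := by
    refine Filter.Tendsto.limUnder_eq ?_
    refine Filter.Tendsto.congr' ?_ (tendsto_const_nhds (x := dist a b))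
    refine hb.mono fun m hm => ?_
    show dist a b = Filter.limUnder (𝒰 : Filter ℕ) fun n => dist (x n) (y m)
    rw [h2 m, hm]
  rw [hL, hR]
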